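/- Validity of the group capacity cut (Equation 16): let V_k be a finite set of customers with demands q_i ≥ 0 and weights s_i ≥ 0, let α ∈ ℝ, Q > 0, and let Z = min{ ∑_{i∈T} q_i : T ⊆ V_k, ∑_{i∈T} s_i ≥ α·∑_{i∈V_k} s_i } (assumed to exist). Consider m closed walks, each starting and ending at a depot vertex v₀ ∉ V_k, whose sets of visited customers within V_k are pairwise disjoint, such that for every walk the total demand of its visited V_k-customers is at most Q, and the union of the visited V_k-customers has total weight at least α·∑_{i∈V_k} s_i. Then the total number, summed over all m walks, of consecutive steps (u_t, u_{t+1}) with exactly one endpoint in V_k is at least 2·⌈Z/Q⌉. -/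

import Mathlib

open Classical

/-- If `P` fails at `a`, holds at `b`, `a ≤ b`, then `P` switches from false to true
at some step between `a` and `b`. -/
private lemma cross_up (P : ℕ → Prop) :
    ∀ b a, a ≤ b → ¬P a → P b → ∃ t, a ≤ t ∧ t < b ∧ ¬P t ∧ P (t + 1) := by
  intro b
  induction b with
  | zero =>
    intro a hab ha hb
    obtain rfl := Nat.le_zero.mp hab
    exact absurd hb ha
  | succ n ih =>
    intro a hab ha hb
    have han : a ≤ n := by
      rcases Nat.eq_or_lt_of_le hab with h | h
      · exact absurd hb (h ▸ ha)
      · omega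
    by_cases hpn : P n
    · obtain ⟨t, h1, h2, h3, h4⟩ := ih a han ha hpn
      exact ⟨t, h1, by omega, h3, h4⟩
    · exact ⟨n, han, Nat.lt_succ_self n, hpn, hb⟩

/-- Validity of the group capacity cut (Equation 16): given `m` closed walks starting
and ending at the depot `v₀ ∉ Vk`, with pairwise disjoint sets of visited customers
of `Vk`, each walk carrying a total `Vk`-demand at most `Q`, and jointly attaining the
service level, the total number of steps with exactly one endpoint in `Vk`, summed over
the walks, is at least `2 ⌈Z / Q⌉`, where `Z` is the minimum total demand of a subset of
`Vk` attaining the service level. -/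
theorem group_capacity_cut {V : Type*} [DecidableEq V]
    (v₀ : V) (Vk : Finset V) (hdepot : v₀ ∉ Vk)
    (q s : V → ℝ) (hq : ∀ i ∈ Vk, 0 ≤ q i) (hs : ∀ i ∈ Vk, 0 ≤ s i)
    (α : ℝ) (Q : ℝ) (hQ : 0 < Q) (Z : ℝ)
    (hZ : IsLeast {x : ℝ | ∃ T ⊆ Vk,
        α * ∑ i ∈ Vk, s i ≤ ∑ i ∈ T, s i ∧ x = ∑ i ∈ T, q i} Z)
    (m : ℕ) (Len : Fin m → ℕ) (w : Fin m → ℕ → V)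
    (hstart : ∀ j, w j 0 = v₀) (hend : ∀ j, w j (Len j + 1) = v₀)
    -- `Vis j` : the customers of `Vk` visited by walk `j`
    (Vis : Fin m → Finset V)
    (hVis : ∀ j, Vis j = Vk.filter (fun i => ∃ t ∈ Finset.Icc 1 (Len j), w j t = i))
    (hdisj : ∀ j j', j ≠ j' → Disjoint (Vis j) (Vis j'))
    (hcap : ∀ j, ∑ i ∈ Vis j, q i ≤ Q)
    (hserv : α * ∑ i ∈ Vk, s i ≤ ∑ i ∈ Finset.univ.biUnion Vis, s i) :
    2 * ⌈Z / Q⌉ ≤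
      (∑ j, ((Finset.range (Len j + 1)).filter
        (fun t => (w j t ∈ Vk ∧ w j (t + 1) ∉ Vk) ∨
                  (w j t ∉ Vk ∧ w j (t + 1) ∈ Vk))).card : ℤ) := by
  classical
  set A : Finset (Fin m) := Finset.univ.filter (fun j => (Vis j).Nonempty) with hA
  -- Step 1 : Z ≤ |A| * Q
  have hsub : ∀ j, Vis j ⊆ Vk := fun j i hi => by rw [hVis j] at hi; simp only [Finset.mem_filter] at hi; exact hi.1
  have hZle : Z ≤ ∑ i ∈ Finset.univ.biUnion Vis, q i :=
    hZ.2 ⟨Finset.univ.biUnion Vis, Finset.biUnion_subset.mpr (fun j _ => hsub j), hserv, rfl⟩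
  have hsum : ∑ i ∈ Finset.univ.biUnion Vis, q i = ∑ j, ∑ i ∈ Vis j, q i :=
    Finset.sum_biUnion (fun j _ j' _ hjj' => hdisj j j' hjj')
  have hsum2 : ∑ j, ∑ i ∈ Vis j, q i ≤ A.card * Q := by
    rw [← Finset.sum_filter_add_sum_filter_not Finset.univ (fun j => (Vis j).Nonempty)]
    have h2 : ∑ j ∈ Finset.univ.filter (fun j => ¬ (Vis j).Nonempty),
        ∑ i ∈ Vis j, q i = 0 := by
      apply Finset.sum_eq_zero
      intro j hj
      simp only [Finset.mem_filter, Finset.not_nonempty_iff_eq_empty] at hj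
      rw [hj.2, Finset.sum_empty]
    rw [h2, add_zero]
    calc ∑ j ∈ A, ∑ i ∈ Vis j, q i ≤ ∑ j ∈ A, Q :=
          Finset.sum_le_sum (fun j _ => hcap j)
      _ = A.card * Q := by rw [Finset.sum_const, nsmul_eq_mul]
  have hceil : ⌈Z / Q⌉ ≤ (A.card : ℤ) := by
    rw [Int.ceil_le, div_le_iff₀ hQ]
    push_cast
    linarith [hsum ▸ hZle]
  -- Step 2 : each active walk has at least two boundary steps
  have hcard : ∀ j ∈ A, 2 ≤ ((Finset.range (Len j + 1)).filter
      (fun t => (w j t ∈ Vk ∧ w j (t + 1) ∉ Vk) ∨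
                (w j t ∉ Vk ∧ w j (t + 1) ∈ Vk))).card := by
    intro j hj
    simp only [hA, Finset.mem_filter] at hj
    obtain ⟨i, hi⟩ := hj.2
    rw [hVis j] at hi
    simp only [Finset.mem_filter] at hi
    obtain ⟨hiVk, t₀, ht₀, hwt₀⟩ := hi
    rw [Finset.mem_Icc] at ht₀
    have hP0 : w j 0 ∉ Vk := by rw [hstart j]; exact hdepot
    have hPend : w j (Len j + 1) ∉ Vk := by rw [hend j]; exact hdepot
    have hPt₀ : w j t₀ ∈ Vk := by rw [hwt₀]; exact hiVk
    obtain ⟨t₁, _, ht₁lt, ht₁n, ht₁p⟩ :=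
      cross_up (fun t => w j t ∈ Vk) t₀ 0 (Nat.zero_le _) hP0 hPt₀
    obtain ⟨t₂, ht₂ge, ht₂lt, ht₂n, ht₂p⟩ :=
      cross_up (fun t => w j t ∉ Vk) (Len j + 1) t₀ (by omega) (not_not_intro hPt₀) hPend
    have ht₂p' : w j t₂ ∈ Vk := not_not.mp ht₂n
    have hmem₁ : t₁ ∈ (Finset.range (Len j + 1)).filter
        (fun t => (w j t ∈ Vk ∧ w j (t + 1) ∉ Vk) ∨
                  (w j t ∉ Vk ∧ w j (t + 1) ∈ Vk)) := by
      rw [Finset.mem_filter, Finset.mem_range]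
      exact ⟨by omega, Or.inr ⟨ht₁n, ht₁p⟩⟩
    have hmem₂ : t₂ ∈ (Finset.range (Len j + 1)).filter
        (fun t => (w j t ∈ Vk ∧ w j (t + 1) ∉ Vk) ∨
                  (w j t ∉ Vk ∧ w j (t + 1) ∈ Vk)) := by
      rw [Finset.mem_filter, Finset.mem_range]
      exact ⟨by omega, Or.inl ⟨ht₂p', ht₂p⟩⟩
    have hne : t₁ ≠ t₂ := by omega
    exact Finset.one_lt_card.mpr ⟨t₁, hmem₁, t₂, hmem₂, hne⟩
  -- Combine
  have htotal : 2 * A.card ≤ ∑ j, ((Finset.range (Len j + 1)).filter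
      (fun t => (w j t ∈ Vk ∧ w j (t + 1) ∉ Vk) ∨
                (w j t ∉ Vk ∧ w j (t + 1) ∈ Vk))).card := by
    calc 2 * A.card = ∑ _j ∈ A, 2 := by rw [Finset.sum_const, smul_eq_mul, mul_comm]
      _ ≤ ∑ j ∈ A, ((Finset.range (Len j + 1)).filter
            (fun t => (w j t ∈ Vk ∧ w j (t + 1) ∉ Vk) ∨
                      (w j t ∉ Vk ∧ w j (t + 1) ∈ Vk))).card :=
          Finset.sum_le_sum hcard
      _ ≤ _ := Finset.sum_le_sum_of_subset (Finset.filter_subset _ _)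
  have := (Nat.cast_le (α := ℤ)).mpr htotal
  push_cast at this ⊢
  linarith [hceil]
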